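/- There is no finite-fold Diophantine representation of the function f. That is, there do not exist r ∈ ℕ and a polynomial W ∈ ℤ[x₁, x₂, y₁,…,y_r] such that both: (i) for all a, b ∈ ℕ, (a ≥ 1 and b = f(a)) holds if and only if there exist y₁,…,y_r ∈ ℕ with W(a, b, y₁,…,y_r) = 0, and (ii) for every (a, b) ∈ ℕ² the set {(y₁,…,y_r) ∈ ℕʳ : W(a, b, y₁,…,y_r) = 0} is finite. -/

import Mathlib

/-- A system `S ⊆ E_n`, encoded by the set `eqOne` of indices `i` carrying the
equation `x_i = 1`, and the sets `addEq`, `mulEq` of triples `(i, j, k)` carrying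
the equations `x_i + x_j = x_k` and `x_i · x_j = x_k` respectively. -/
structure SystemEn (n : ℕ) where
  eqOne : Finset (Fin n)
  addEq : Finset (Fin n × Fin n × Fin n)
  mulEq : Finset (Fin n × Fin n × Fin n)

/-- A tuple `x` solves the system `S` if it satisfies all equations of `S`. -/
def SystemEn.Solves {n : ℕ} {R : Type*} [Semiring R] (S : SystemEn n) (x : Fin n → R) : Prop :=
  (∀ i ∈ S.eqOne, x i = 1) ∧
  (∀ t ∈ S.addEq, x t.1 + x t.2.1 = x t.2.2) ∧
  (∀ t ∈ S.mulEq, x t.1 * x t.2.1 = x t.2.2)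

/-- `fBound n` is the smallest non-negative integer `b` such that for each system
`S ⊆ E_n` with a finite number of solutions in integers `x₁, …, xₙ`, all these
solutions belong to `[-b, b]ⁿ`. -/
noncomputable def fBound (n : ℕ) : ℕ :=
  sInf {b : ℕ | ∀ S : SystemEn n, {x : Fin n → ℤ | S.Solves x}.Finite →
    ∀ x : Fin n → ℤ, S.Solves x → ∀ i, |x i| ≤ (b : ℤ)}

/-- `gBound n` is the greatest finite total number of solutions of a subsystem of
`E_n` in integers `x₁, …, xₙ`. -/
noncomputable def gBound (n : ℕ) : ℕ :=
  sSup {c : ℕ | ∃ S : SystemEn n, {x : Fin n → ℤ | S.Solves x}.Finite ∧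
    {x : Fin n → ℤ | S.Solves x}.ncard = c}

open MvPolynomial

namespace Dio

inductive Instr where
  | one : Instr
  | add (i j : ℕ) : Instr
  | mul (i j : ℕ) : Instr
  | aeq (i j : ℕ) : Instr
deriving DecidableEq

def Instr.isAeq : Instr → Bool
  | .aeq _ _ => true
  | _ => false

def Instr.val (e : ℕ → ℤ) : Instr → ℤ
  | .one => 1
  | .add i j => e i + e j
  | .mul i j => e i * e j
  | .aeq _ _ => 0

def Instr.ok (e : ℕ → ℤ) : Instr → Prop
  | .aeq i j => e i = e j
  | _ => True

def Instr.refsLt (m : ℕ) : Instr → Prop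
  | .one => True
  | .add i j => i < m ∧ j < m
  | .mul i j => i < m ∧ j < m
  | .aeq i j => i < m ∧ j < m

def Instr.holds (e : ℕ → ℤ) (k : ℕ) : Instr → Prop
  | .one => e k = 1
  | .add i j => e i + e j = e k
  | .mul i j => e i * e j = e k
  | .aeq i j => e k + e k = e k ∧ e i + e k = e j

lemma Instr.holds_imp {e : ℕ → ℤ} {k : ℕ} {ins : Instr} (h : ins.holds e k) :
    e k = ins.val e ∧ ins.ok e := by
  cases ins with
  | one => exact ⟨h, trivial⟩
  | add i j => exact ⟨h.symm, trivial⟩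
  | mul i j => exact ⟨h.symm, trivial⟩
  | aeq i j =>
    have h0 : e k = 0 := by have := h.1; omega
    have := h.2
    constructor
    · exact h0
    · simp only [Instr.ok]; omega

lemma Instr.mk_holds {e : ℕ → ℤ} {k : ℕ} {ins : Instr} (h1 : e k = ins.val e)
    (h2 : ins.ok e) : ins.holds e k := by
  cases ins with
  | one => exact h1
  | add i j => exact h1.symm
  | mul i j => exact h1.symm
  | aeq i j =>
    simp only [Instr.val] at h1
    simp only [Instr.ok] at h2
    exact ⟨by omega, by omega⟩

lemma Instr.val_congr {e e' : ℕ → ℤ} {m : ℕ} {ins : Instr} (h : ins.refsLt m)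
    (he : ∀ i < m, e i = e' i) : ins.val e = ins.val e' := by
  cases ins with
  | one => rfl
  | add i j => simp only [Instr.val, he i h.1, he j h.2]
  | mul i j => simp only [Instr.val, he i h.1, he j h.2]
  | aeq i j => rfl

lemma Instr.ok_congr {e e' : ℕ → ℤ} {m : ℕ} {ins : Instr} (h : ins.refsLt m)
    (he : ∀ i < m, e i = e' i) : ins.ok e ↔ ins.ok e' := by
  cases ins with
  | one => rfl
  | add i j => rfl
  | mul i j => rfl
  | aeq i j => simp only [Instr.ok, he i h.1, he j h.2]

/-- run a program, extending the environment list. -/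
def runL : List ℤ → List Instr → List ℤ
  | e, [] => e
  | e, ins :: rest => runL (e ++ [ins.val (fun i => e.getD i 0)]) rest

lemma runL_append (e : List ℤ) (l₁ l₂ : List Instr) :
    runL e (l₁ ++ l₂) = runL (runL e l₁) l₂ := by
  induction l₁ generalizing e with
  | nil => rfl
  | cons ins rest ih => simp [runL, ih]

@[simp] lemma runL_nil (e : List ℤ) : runL e [] = e := rfl

lemma runL_single (e : List ℤ) (ins : Instr) :
    runL e [ins] = e ++ [ins.val (fun i => e.getD i 0)] := rfl

lemma runL_length (e : List ℤ) (l : List Instr) :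
    (runL e l).length = e.length + l.length := by
  induction l generalizing e with
  | nil => simp [runL]
  | cons ins rest ih => simp [runL, ih]; omega

lemma runL_prefix (e : List ℤ) (l : List Instr) : e <+: runL e l := by
  induction l generalizing e with
  | nil => simp [runL]
  | cons ins rest ih =>
    exact ((e.prefix_append _).trans (ih _))

lemma runL_getD_low (e : List ℤ) (l : List Instr) {i : ℕ} (h : i < e.length) :
    (runL e l).getD i 0 = e.getD i 0 := by
  obtain ⟨t, ht⟩ := runL_prefix e l
  rw [← ht, List.getD_append _ _ _ _ h]

def okAll : List ℤ → List Instr → Prop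
  | _, [] => True
  | e, ins :: rest => ins.ok (fun i => e.getD i 0) ∧
      okAll (e ++ [ins.val (fun i => e.getD i 0)]) rest

lemma okAll_append (e : List ℤ) (l₁ l₂ : List Instr) :
    okAll e (l₁ ++ l₂) ↔ okAll e l₁ ∧ okAll (runL e l₁) l₂ := by
  induction l₁ generalizing e with
  | nil => simp [okAll, runL]
  | cons ins rest ih => simp [okAll, runL, ih]; tauto

def WF (p : ℕ) (prog : List Instr) : Prop :=
  ∀ t (h : t < prog.length), (prog.get ⟨t, h⟩).refsLt (p + t)

lemma WF_append {p : ℕ} {l₁ l₂ : List Instr} (h₁ : WF p l₁) (h₂ : WF (p + l₁.length) l₂) :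
    WF p (l₁ ++ l₂) := by
  intro t ht
  rcases lt_or_ge t l₁.length with h | h
  · have : (l₁ ++ l₂).get ⟨t, ht⟩ = l₁.get ⟨t, h⟩ := by
      simp [List.getElem_append_left h]
    rw [this]; exact h₁ t h
  · have ht2 : t - l₁.length < l₂.length := by
      have := ht; simp at this; omega
    have : (l₁ ++ l₂).get ⟨t, ht⟩ = l₂.get ⟨t - l₁.length, ht2⟩ := by
      simp [List.getElem_append_right h]
    rw [this]
    have := h₂ (t - l₁.length) ht2
    have heq : p + l₁.length + (t - l₁.length) = p + t := by omega
    rwa [heq] at this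

lemma WF_mono {p p' : ℕ} {l : List Instr} (h : WF p l) (hp : p ≤ p') : WF p' l := by
  intro t ht
  have := h t ht
  cases hins : l.get ⟨t, ht⟩ <;> rw [hins] at this <;> simp [Instr.refsLt] at * <;> omega

end Dio

namespace Dio

def addTripP (p : ℕ) (prog : List Instr) (a b c : ℕ) : Prop :=
  (p ≤ c ∧ prog[c - p]? = some (.add a b)) ∨
  (p ≤ a ∧ a = b ∧ b = c ∧ (prog[a - p]?.elim false Instr.isAeq = true)) ∨
  (p ≤ b ∧ prog[b - p]? = some (.aeq a c))

instance (p : ℕ) (prog : List Instr) (a b c : ℕ) : Decidable (addTripP p prog a b c) := by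
  unfold addTripP; infer_instance

def extEnv {N : ℕ} (x : Fin N → ℤ) : ℕ → ℤ := fun i => if h : i < N then x ⟨i, h⟩ else 0

def sysOf (p : ℕ) (prog : List Instr) : SystemEn (p + prog.length) where
  eqOne := Finset.univ.filter fun k : Fin (p + prog.length) =>
    p ≤ k.val ∧ prog[k.val - p]? = some .one
  addEq := Finset.univ.filter fun t => addTripP p prog t.1.val t.2.1.val t.2.2.val
  mulEq := Finset.univ.filter fun t =>
    p ≤ t.2.2.val ∧ prog[t.2.2.val - p]? = some (.mul t.1.val t.2.1.val)

lemma extEnv_eq {N : ℕ} (x : Fin N → ℤ) (i : Fin N) : extEnv x i.val = x i := by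
  simp [extEnv]


lemma get?_some {prog : List Instr} {m : ℕ} {ins : Instr} (h : prog[m]? = some ins) :
    ∃ hm : m < prog.length, prog.get ⟨m, hm⟩ = ins := by
  have hm : m < prog.length := by
    by_contra hc
    rw [List.getElem?_eq_none (by omega)] at h; simp at h
  refine ⟨hm, ?_⟩
  rw [List.getElem?_eq_getElem hm] at h
  simpa using h

lemma elim_isAeq {prog : List Instr} {m : ℕ}
    (h : prog[m]?.elim false Instr.isAeq = true) :
    ∃ (hm : m < prog.length) (i j : ℕ), prog.get ⟨m, hm⟩ = .aeq i j := by
  have hm : m < prog.length := by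
    by_contra hc
    rw [List.getElem?_eq_none (by omega)] at h; simp at h
  refine ⟨hm, ?_⟩
  rw [List.getElem?_eq_getElem hm] at h
  simp only [Option.elim] at h
  rw [List.get_eq_getElem]
  cases hi : prog[m] <;> rw [hi] at h <;> simp [Instr.isAeq] at h ⊢

lemma solves_iff (p : ℕ) (prog : List Instr) (hWF : WF p prog)
    (x : Fin (p + prog.length) → ℤ) :
    (sysOf p prog).Solves x ↔
      ∀ t (h : t < prog.length), (prog.get ⟨t, h⟩).holds (extEnv x) (p + t) := by
  have eE : ∀ (m : ℕ) (hm : m < p + prog.length), extEnv x m = x ⟨m, hm⟩ :=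
    fun m hm => dif_pos hm
  constructor
  · rintro ⟨h1, h2, h3⟩ t ht
    have hlt : p + t < p + prog.length := by omega
    have hget : prog[(p + t) - p]? = some (prog.get ⟨t, ht⟩) := by
      simp [List.getElem?_eq_getElem ht]
    have hrefs := hWF t ht
    cases hins : prog.get ⟨t, ht⟩ with
    | one =>
      simp only [Instr.holds]
      rw [eE _ hlt]
      apply h1
      simp only [sysOf, Finset.mem_filter, Finset.mem_univ, true_and]
      exact ⟨by omega, by rw [hins] at hget; exact hget⟩
    | add i j =>
      rw [hins] at hrefs
      have hi : i < p + prog.length := by have := hrefs.1; omega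
      have hj : j < p + prog.length := by have := hrefs.2; omega
      simp only [Instr.holds]
      rw [eE _ hlt, eE _ hi, eE _ hj]
      apply h2 (⟨i, hi⟩, ⟨j, hj⟩, ⟨p + t, hlt⟩)
      simp only [sysOf, Finset.mem_filter, Finset.mem_univ, true_and]
      left
      exact ⟨by omega, by rw [hins] at hget; exact hget⟩
    | mul i j =>
      rw [hins] at hrefs
      have hi : i < p + prog.length := by have := hrefs.1; omega
      have hj : j < p + prog.length := by have := hrefs.2; omega
      simp only [Instr.holds]
      rw [eE _ hlt, eE _ hi, eE _ hj]
      apply h3 (⟨i, hi⟩, ⟨j, hj⟩, ⟨p + t, hlt⟩)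
      simp only [sysOf, Finset.mem_filter, Finset.mem_univ, true_and]
      exact ⟨by omega, by rw [hins] at hget; exact hget⟩
    | aeq i j =>
      rw [hins] at hrefs
      have hi : i < p + prog.length := by have := hrefs.1; omega
      have hj : j < p + prog.length := by have := hrefs.2; omega
      rw [hins] at hget
      simp only [Instr.holds]
      rw [eE _ hlt, eE _ hi, eE _ hj]
      constructor
      · apply h2 (⟨p + t, hlt⟩, ⟨p + t, hlt⟩, ⟨p + t, hlt⟩)
        simp only [sysOf, Finset.mem_filter, Finset.mem_univ, true_and]
        right; left
        refine ⟨by omega, rfl, rfl, ?_⟩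
        rw [hget]; rfl
      · apply h2 (⟨i, hi⟩, ⟨p + t, hlt⟩, ⟨j, hj⟩)
        simp only [sysOf, Finset.mem_filter, Finset.mem_univ, true_and]
        right; right
        exact ⟨by omega, hget⟩
  · intro hH
    refine ⟨?_, ?_, ?_⟩
    · intro k hk
      simp only [sysOf, Finset.mem_filter, Finset.mem_univ, true_and] at hk
      obtain ⟨hpk, hget⟩ := hk
      obtain ⟨ht, hins⟩ := get?_some hget
      have := hH _ ht
      rw [hins] at this
      simp only [Instr.holds] at this
      have hkk : p + (k.val - p) = k.val := by omega
      rw [hkk, eE _ k.isLt] at this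
      simpa using this
    · rintro ⟨a, b, c⟩ htmem
      simp only [sysOf, Finset.mem_filter, Finset.mem_univ, true_and] at htmem
      rcases htmem with ⟨hpc, hget⟩ | ⟨hpa, hab, hbc, hget⟩ | ⟨hpb, hget⟩
      · obtain ⟨ht, hins⟩ := get?_some hget
        have := hH _ ht
        rw [hins] at this
        simp only [Instr.holds] at this
        have hkk : p + (c.val - p) = c.val := by omega
        rw [hkk, eE _ a.isLt, eE _ b.isLt, eE _ c.isLt] at this
        simpa using this
      · obtain ⟨ht, i, j, hins⟩ := elim_isAeq hget
        have := hH _ ht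
        rw [List.get_eq_getElem] at hins
        rw [List.get_eq_getElem, hins] at this
        simp only [Instr.holds] at this
        have hkk : p + (a.val - p) = a.val := by omega
        rw [hkk, eE _ a.isLt] at this
        have hb : b = a := Fin.ext hab.symm
        have hc : c = a := Fin.ext (hbc.symm.trans hab.symm)
        subst hb; subst hc
        simpa using this.1
      · obtain ⟨ht, hins⟩ := get?_some hget
        have := hH _ ht
        rw [hins] at this
        simp only [Instr.holds] at this
        have hkk : p + (b.val - p) = b.val := by omega
        rw [hkk, eE _ a.isLt, eE _ b.isLt, eE _ c.isLt] at this
        simpa using this.2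
    · rintro ⟨a, b, c⟩ htmem
      simp only [sysOf, Finset.mem_filter, Finset.mem_univ, true_and] at htmem
      obtain ⟨hpc, hget⟩ := htmem
      obtain ⟨ht, hins⟩ := get?_some hget
      have := hH _ ht
      rw [hins] at this
      simp only [Instr.holds] at this
      have hkk : p + (c.val - p) = c.val := by omega
      rw [hkk, eE _ a.isLt, eE _ b.isLt, eE _ c.isLt] at this
      simpa using this


lemma Instr.refsLt_mono {m m' : ℕ} {ins : Instr} (h : ins.refsLt m) (hm : m ≤ m') :
    ins.refsLt m' := by
  cases ins <;> simp [Instr.refsLt] at * <;> omega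

lemma WF_take {p : ℕ} {l : List Instr} {ins : Instr} (h : WF p (l ++ [ins])) : WF p l := by
  intro t ht
  have ht' : t < (l ++ [ins]).length := by simp; omega
  have := h t ht'
  rwa [show (l ++ [ins]).get ⟨t, ht'⟩ = l.get ⟨t, ht⟩ by
    simp [List.get_eq_getElem, List.getElem_append_left ht]] at this

lemma WF_last {p : ℕ} {l : List Instr} {ins : Instr} (h : WF p (l ++ [ins])) :
    ins.refsLt (p + l.length) := by
  have ht' : l.length < (l ++ [ins]).length := by simp
  have := h l.length ht'
  rwa [show (l ++ [ins]).get ⟨l.length, ht'⟩ = ins by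
    simp [List.get_eq_getElem]] at this

/-- Determinism: if all equations of the system hold, every wire value equals the
canonical run value, and the run constraints hold. -/
lemma det (p : ℕ) (prog : List Instr) (hWF : WF p prog) (e : ℕ → ℤ)
    (hH : ∀ t (h : t < prog.length), (prog.get ⟨t, h⟩).holds e (p + t)) :
    (∀ i < p + prog.length,
      e i = (runL (List.ofFn fun j : Fin p => e j.val) prog).getD i 0) ∧
    okAll (List.ofFn fun j : Fin p => e j.val) prog := by
  induction prog using List.reverseRecOn with
  | nil =>
    refine ⟨fun i hi => ?_, trivial⟩
    simp only [runL_nil]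
    rw [List.getD_eq_getElem _ _ (by simpa using hi)]
    simp
  | append_singleton l ins ih =>
    have hWF' : WF p l := WF_take hWF
    have hH' : ∀ t (h : t < l.length), (l.get ⟨t, h⟩).holds e (p + t) := by
      intro t ht
      have ht' : t < (l ++ [ins]).length := by simp; omega
      have := hH t ht'
      rwa [show (l ++ [ins]).get ⟨t, ht'⟩ = l.get ⟨t, ht⟩ by
        simp [List.get_eq_getElem, List.getElem_append_left ht]] at this
    obtain ⟨ihv, ihok⟩ := ih hWF' hH'
    set inp := (List.ofFn fun j : Fin p => e j.val) with hinp
    set A := runL inp l with hA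
    have hAlen : A.length = p + l.length := by
      rw [hA, runL_length]; simp [hinp]
    set k := p + l.length with hk
    have hrun : runL inp (l ++ [ins]) = A ++ [ins.val (fun i => A.getD i 0)] := by
      rw [runL_append]; rfl
    have hrefs : ins.refsLt k := WF_last hWF
    have hlast : (l ++ [ins]).get ⟨l.length, by simp⟩ = ins := by
      simp [List.get_eq_getElem]
    have hholds : ins.holds e k := by
      have := hH l.length (by simp)
      rwa [hlast] at this
    obtain ⟨hval, hok⟩ := Instr.holds_imp hholds
    have hcongr : ins.val e = ins.val (fun i => A.getD i 0) :=
      Instr.val_congr hrefs (fun i hi => ihv i (by omega))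
    have hvals : ∀ i < p + (l ++ [ins]).length,
        e i = (runL inp (l ++ [ins])).getD i 0 := by
      intro i hi
      rw [hrun]
      rcases lt_or_ge i k with h | h
      · rw [List.getD_append _ _ _ _ (by omega)]
        exact ihv i (by omega)
      · have : i = k := by simp at hi; omega
        subst this
        rw [List.getD_append_right _ _ _ _ (by omega)]
        rw [hval, hcongr]
        simp [hAlen]
    refine ⟨hvals, ?_⟩
    rw [okAll_append]
    refine ⟨ihok, ?_⟩
    simp only [okAll, ← hA]
    refine ⟨?_, trivial⟩
    rw [← Instr.ok_congr hrefs (fun i hi => ihv i (by omega))]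
    exact hok

/-- Canonical wire values satisfy the instruction value recurrences, and under
`okAll` also the constraints. -/
lemma canon_holds (p : ℕ) (prog : List Instr) (hWF : WF p prog) (inp : List ℤ)
    (hlen : inp.length = p) :
    ∀ t (h : t < prog.length),
      (runL inp prog).getD (p + t) 0
        = (prog.get ⟨t, h⟩).val (fun i => (runL inp prog).getD i 0) ∧
      (okAll inp prog → (prog.get ⟨t, h⟩).ok (fun i => (runL inp prog).getD i 0)) := by
  induction prog using List.reverseRecOn with
  | nil => intro t ht; simp at ht
  | append_singleton l ins ih =>
    intro t ht
    set A := runL inp l with hA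
    have hAlen : A.length = p + l.length := by rw [hA, runL_length, hlen]
    have hrun : runL inp (l ++ [ins]) = A ++ [ins.val (fun i => A.getD i 0)] := by
      rw [runL_append]; rfl
    have hagree : ∀ i < p + l.length,
        (runL inp (l ++ [ins])).getD i 0 = A.getD i 0 := by
      intro i hi
      rw [hrun, List.getD_append _ _ _ _ (by omega)]
    have hrefs : ins.refsLt (p + l.length) := WF_last hWF
    rcases lt_or_ge t l.length with h | h
    · have hins : (l ++ [ins]).get ⟨t, ht⟩ = l.get ⟨t, h⟩ := by
        simp [List.get_eq_getElem, List.getElem_append_left h]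
      rw [hins]
      obtain ⟨ihv, ihok⟩ := ih (WF_take hWF) t h
      have hrefs' : (l.get ⟨t, h⟩).refsLt (p + t) := WF_take hWF t h
      have hrefs'' : (l.get ⟨t, h⟩).refsLt (p + l.length) :=
        Instr.refsLt_mono hrefs' (by omega)
      constructor
      · rw [hagree (p + t) (by omega), ihv]
        exact (Instr.val_congr hrefs'' (fun i hi => (hagree i hi))).symm
      · intro hok
        have hok' : okAll inp l := ((okAll_append inp l [ins]).mp hok).1
        rw [Instr.ok_congr hrefs'' (fun i hi => hagree i hi)]
        exact ihok hok'
    · have hteq : t = l.length := by simp at ht; omega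
      subst hteq
      have hins : (l ++ [ins]).get ⟨l.length, ht⟩ = ins := by
        simp [List.get_eq_getElem]
      rw [hins]
      have hvk : (runL inp (l ++ [ins])).getD (p + l.length) 0
          = ins.val (fun i => A.getD i 0) := by
        rw [hrun, List.getD_append_right _ _ _ _ (by omega)]
        simp [hAlen]
      constructor
      · rw [hvk]
        exact Instr.val_congr hrefs (fun i hi => (hagree i hi).symm)
      · intro hok
        have hok' := ((okAll_append inp l [ins]).mp hok).2
        simp only [okAll, ← hA] at hok'
        rw [Instr.ok_congr hrefs (fun i hi => hagree i hi)]
        exact hok'.1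

/-- The canonical assignment built from inputs solves the system,
provided the constraints hold. -/
lemma canon_solves (p : ℕ) (prog : List Instr) (hWF : WF p prog) (inp : List ℤ)
    (hlen : inp.length = p) (hok : okAll inp prog) :
    (sysOf p prog).Solves
      (fun i : Fin (p + prog.length) => (runL inp prog).getD i.val 0) := by
  rw [solves_iff p prog hWF]
  intro t ht
  have hext : extEnv (fun i : Fin (p + prog.length) => (runL inp prog).getD i.val 0)
      = fun i => (runL inp prog).getD i 0 := by
    funext i
    simp only [extEnv]
    split
    · rfl
    · rw [List.getD_eq_default]
      rw [runL_length, hlen]; omega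
  rw [hext]
  obtain ⟨hv, ho⟩ := canon_holds p prog hWF inp hlen t ht
  exact Instr.mk_holds hv (ho hok)

/-- Solutions are determined by their first `p` coordinates. -/
lemma sols_inj (p : ℕ) (prog : List Instr) (hWF : WF p prog)
    {x₁ x₂ : Fin (p + prog.length) → ℤ}
    (h₁ : (sysOf p prog).Solves x₁) (h₂ : (sysOf p prog).Solves x₂)
    (heq : ∀ j : Fin p, x₁ (Fin.castLE (by omega) j) = x₂ (Fin.castLE (by omega) j)) :
    x₁ = x₂ := by
  rw [solves_iff p prog hWF] at h₁ h₂
  obtain ⟨d₁, -⟩ := det p prog hWF _ h₁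
  obtain ⟨d₂, -⟩ := det p prog hWF _ h₂
  have hinp : (List.ofFn fun j : Fin p => extEnv x₁ j.val)
      = (List.ofFn fun j : Fin p => extEnv x₂ j.val) := by
    congr 1
    funext j
    have hj : (j : ℕ) < p + prog.length := by omega
    rw [show extEnv x₁ j.val = x₁ ⟨j.val, hj⟩ from dif_pos hj,
        show extEnv x₂ j.val = x₂ ⟨j.val, hj⟩ from dif_pos hj]
    exact heq j
  funext i
  have h1 := d₁ i.val i.isLt
  have h2 := d₂ i.val i.isLt
  rw [extEnv_eq] at h1 h2
  rw [h1, h2, hinp]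


/-- Polynomial expressions with nonnegative constants. -/
inductive PE (σ : Type*) where
  | one : PE σ
  | zero : PE σ
  | X (v : σ) : PE σ
  | add (a b : PE σ) : PE σ
  | mul (a b : PE σ) : PE σ

namespace PE

variable {σ τ : Type*}

def eval (v : σ → ℤ) : PE σ → ℤ
  | .one => 1
  | .zero => 0
  | .X s => v s
  | .add a b => a.eval v + b.eval v
  | .mul a b => a.eval v * b.eval v

def len : PE σ → ℕ
  | .one => 1
  | .zero => 2
  | .X _ => 0
  | .add a b => a.len + b.len + 1
  | .mul a b => a.len + b.len + 1

def out (pos : σ → ℕ) (start : ℕ) : PE σ → ℕ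
  | .X s => pos s
  | pe => start + pe.len - 1

def comp (pos : σ → ℕ) (start : ℕ) : PE σ → List Instr
  | .one => [.one]
  | .zero => [.one, .aeq start start]
  | .X _ => []
  | .add a b => a.comp pos start ++ b.comp pos (start + a.len)
      ++ [.add (a.out pos start) (b.out pos (start + a.len))]
  | .mul a b => a.comp pos start ++ b.comp pos (start + a.len)
      ++ [.mul (a.out pos start) (b.out pos (start + a.len))]

lemma comp_length (pos : σ → ℕ) (start : ℕ) (pe : PE σ) :
    (pe.comp pos start).length = pe.len := by
  induction pe generalizing start with
  | one => rfl
  | zero => rfl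
  | X s => rfl
  | add a b iha ihb => simp [comp, len, iha, ihb]; omega
  | mul a b iha ihb => simp [comp, len, iha, ihb]; omega

def subst (g : σ → PE τ) : PE σ → PE τ
  | .one => .one
  | .zero => .zero
  | .X s => g s
  | .add a b => .add (a.subst g) (b.subst g)
  | .mul a b => .mul (a.subst g) (b.subst g)

lemma eval_subst (g : σ → PE τ) (v : τ → ℤ) (pe : PE σ) :
    (pe.subst g).eval v = pe.eval (fun s => (g s).eval v) := by
  induction pe with
  | one => rfl
  | zero => rfl
  | X s => rfl
  | add a b iha ihb => simp [subst, eval, iha, ihb]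
  | mul a b iha ihb => simp [subst, eval, iha, ihb]

def ofNat : ℕ → PE σ
  | 0 => .zero
  | k + 1 => .add (ofNat k) .one

lemma eval_ofNat (v : σ → ℤ) (k : ℕ) : (ofNat k : PE σ).eval v = (k : ℤ) := by
  induction k with
  | zero => rfl
  | succ k ih =>
    simp only [ofNat, eval, ih]
    push_cast; ring

lemma len_ofNat (k : ℕ) : (ofNat k : PE σ).len = 2 * k + 2 := by
  induction k with
  | zero => rfl
  | succ k ih => simp [ofNat, len, ih]; omega

/-- The compiler specification. -/
lemma comp_spec (pe : PE σ) (pos : σ → ℕ) (v : σ → ℤ) :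
    ∀ (e : List ℤ) (start : ℕ), e.length = start →
    (∀ s : σ, pos s < start ∧ e.getD (pos s) 0 = v s) →
    runL e (pe.comp pos start) = runL e (pe.comp pos start) ∧
    (runL e (pe.comp pos start)).getD (pe.out pos start) 0 = pe.eval v ∧
    pe.out pos start < start + pe.len ∧
    WF start (pe.comp pos start) ∧
    okAll e (pe.comp pos start) := by
  induction pe with
  | one =>
    intro e start hlen hpos
    refine ⟨rfl, ?_, ?_, ?_, ?_⟩
    · show (e ++ [(1 : ℤ)]).getD (start + 1 - 1) 0 = 1
      rw [List.getD_append_right _ _ _ _ (by omega)]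
      simp [hlen]
    · simp [out, len]
    · intro t ht
      have ht0 : t = 0 := by simp [comp] at ht; omega
      subst ht0
      trivial
    · exact ⟨trivial, trivial⟩
  | zero =>
    intro e start hlen hpos
    have h1 : runL e (comp pos start .zero)
        = e ++ [(1 : ℤ)] ++ [(0 : ℤ)] := by
      simp [comp, runL, Instr.val]
    refine ⟨rfl, ?_, ?_, ?_, ?_⟩
    · rw [h1]
      show (e ++ [(1:ℤ)] ++ [(0:ℤ)]).getD (start + 2 - 1) 0 = 0
      rw [List.getD_append_right _ _ _ _ (by simp; omega)]
      simp [hlen]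
    · simp [out, len]
    · intro t ht
      simp [comp] at ht
      interval_cases t
      · trivial
      · exact ⟨by omega, by omega⟩
    · exact ⟨trivial, by simp [okAll, Instr.ok, Instr.val]⟩
  | X s =>
    intro e start hlen hpos
    refine ⟨rfl, ?_, ?_, ?_, trivial⟩
    · simpa [comp, out, runL, PE.eval] using (hpos s).2
    · simpa [out, len] using (hpos s).1
    · intro t ht; simp [comp] at ht
  | add a b iha ihb =>
    intro e start hlen hpos
    obtain ⟨-, hav, hao, haWF, haok⟩ := iha e start hlen hpos
    set e₁ := runL e (a.comp pos start) with he₁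
    have he₁len : e₁.length = start + a.len := by
      rw [he₁, runL_length, hlen, comp_length]
    have hpos₁ : ∀ s : σ, pos s < start + a.len ∧ e₁.getD (pos s) 0 = v s := by
      intro s
      refine ⟨by have := (hpos s).1; omega, ?_⟩
      rw [he₁, runL_getD_low _ _ (by rw [hlen]; exact (hpos s).1)]
      exact (hpos s).2
    obtain ⟨-, hbv, hbo, hbWF, hbok⟩ := ihb e₁ (start + a.len) he₁len hpos₁
    set e₂ := runL e₁ (b.comp pos (start + a.len)) with he₂
    have he₂len : e₂.length = start + a.len + b.len := by
      rw [he₂, runL_length, he₁len, comp_length]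
    have hav₂ : e₂.getD (a.out pos start) 0 = a.eval v := by
      rw [he₂, runL_getD_low _ _ (by rw [he₁len]; omega)]
      exact hav
    have hrun : runL e (comp pos start (.add a b))
        = e₂ ++ [a.eval v + b.eval v] := by
      show runL e (a.comp pos start ++ b.comp pos (start + a.len) ++ _) = _
      rw [runL_append, runL_append, ← he₁, ← he₂, runL_single]
      congr 2
      simp only [Instr.val]
      rw [hav₂, hbv]
    have hlen' : (comp pos start (.add a b)).length = a.len + b.len + 1 :=
      comp_length pos start (.add a b)
    refine ⟨rfl, ?_, ?_, ?_, ?_⟩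
    · rw [hrun]
      show _ = a.eval v + b.eval v
      have : out pos start (.add a b) = start + a.len + b.len := by
        simp [out, len]; omega
      rw [this, List.getD_append_right _ _ _ _ (by omega)]
      simp [he₂len]
    · show start + (a.len + b.len + 1) - 1 < start + len (.add a b)
      simp only [len]; omega
    · show WF start (a.comp pos start ++ b.comp pos (start + a.len) ++ _)
      apply WF_append
      · apply WF_append haWF
        rwa [comp_length]
      · intro t ht
        have ht0 : t = 0 := by simp at ht; omega
        subst ht0
        simp only [List.get_eq_getElem, List.getElem_singleton]
        have hl : (a.comp pos start ++ b.comp pos (start + a.len)).length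
            = a.len + b.len := by simp [comp_length]
        rw [hl]
        exact ⟨by omega, by omega⟩
    · show okAll e (a.comp pos start ++ b.comp pos (start + a.len) ++ _)
      rw [okAll_append, okAll_append, runL_append, ← he₁, ← he₂]
      exact ⟨⟨haok, hbok⟩, by simp [okAll, Instr.ok]⟩
  | mul a b iha ihb =>
    intro e start hlen hpos
    obtain ⟨-, hav, hao, haWF, haok⟩ := iha e start hlen hpos
    set e₁ := runL e (a.comp pos start) with he₁
    have he₁len : e₁.length = start + a.len := by
      rw [he₁, runL_length, hlen, comp_length]
    have hpos₁ : ∀ s : σ, pos s < start + a.len ∧ e₁.getD (pos s) 0 = v s := by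
      intro s
      refine ⟨by have := (hpos s).1; omega, ?_⟩
      rw [he₁, runL_getD_low _ _ (by rw [hlen]; exact (hpos s).1)]
      exact (hpos s).2
    obtain ⟨-, hbv, hbo, hbWF, hbok⟩ := ihb e₁ (start + a.len) he₁len hpos₁
    set e₂ := runL e₁ (b.comp pos (start + a.len)) with he₂
    have he₂len : e₂.length = start + a.len + b.len := by
      rw [he₂, runL_length, he₁len, comp_length]
    have hav₂ : e₂.getD (a.out pos start) 0 = a.eval v := by
      rw [he₂, runL_getD_low _ _ (by rw [he₁len]; omega)]
      exact hav
    have hrun : runL e (comp pos start (.mul a b))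
        = e₂ ++ [a.eval v * b.eval v] := by
      show runL e (a.comp pos start ++ b.comp pos (start + a.len) ++ _) = _
      rw [runL_append, runL_append, ← he₁, ← he₂, runL_single]
      congr 2
      simp only [Instr.val]
      rw [hav₂, hbv]
    refine ⟨rfl, ?_, ?_, ?_, ?_⟩
    · rw [hrun]
      show _ = a.eval v * b.eval v
      have : out pos start (.mul a b) = start + a.len + b.len := by
        simp [out, len]; omega
      rw [this, List.getD_append_right _ _ _ _ (by omega)]
      simp [he₂len]
    · show start + (a.len + b.len + 1) - 1 < start + len (.mul a b)
      simp only [len]; omega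
    · show WF start (a.comp pos start ++ b.comp pos (start + a.len) ++ _)
      apply WF_append
      · apply WF_append haWF
        rwa [comp_length]
      · intro t ht
        have ht0 : t = 0 := by simp at ht; omega
        subst ht0
        simp only [List.get_eq_getElem, List.getElem_singleton]
        have hl : (a.comp pos start ++ b.comp pos (start + a.len)).length
            = a.len + b.len := by simp [comp_length]
        rw [hl]
        exact ⟨by omega, by omega⟩
    · show okAll e (a.comp pos start ++ b.comp pos (start + a.len) ++ _)
      rw [okAll_append, okAll_append, runL_append, ← he₁, ← he₂]
      exact ⟨⟨haok, hbok⟩, by simp [okAll, Instr.ok]⟩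

end PE


lemma exists_PE_decomp {σ : Type*} (W : MvPolynomial σ ℤ) :
    ∃ P Q : PE σ, ∀ f : σ → ℤ, MvPolynomial.eval f W = P.eval f - Q.eval f := by
  induction W using MvPolynomial.induction_on with
  | C a =>
    refine ⟨PE.ofNat a.toNat, PE.ofNat (-a).toNat, fun f => ?_⟩
    simp only [MvPolynomial.eval_C, PE.eval_ofNat]
    omega
  | add p q ihp ihq =>
    obtain ⟨P1, Q1, h1⟩ := ihp
    obtain ⟨P2, Q2, h2⟩ := ihq
    refine ⟨P1.add P2, Q1.add Q2, fun f => ?_⟩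
    simp [PE.eval, h1, h2]
    ring
  | mul_X p n ih =>
    obtain ⟨P, Q, h⟩ := ih
    refine ⟨P.mul (PE.X n), Q.mul (PE.X n), fun f => ?_⟩
    simp [PE.eval, h]
    ring

instance (n : ℕ) : Finite (SystemEn n) := by
  apply Finite.of_surjective
    (fun t : Finset (Fin n) × Finset (Fin n × Fin n × Fin n) × Finset (Fin n × Fin n × Fin n) =>
      SystemEn.mk t.1 t.2.1 t.2.2)
  rintro ⟨a, b, c⟩
  exact ⟨(a, b, c), rfl⟩

def Bset (n : ℕ) : Set ℕ :=
  {b : ℕ | ∀ S : SystemEn n, {x : Fin n → ℤ | S.Solves x}.Finite →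
    ∀ x : Fin n → ℤ, S.Solves x → ∀ i, |x i| ≤ (b : ℤ)}

lemma fBound_eq (n : ℕ) : fBound n = sInf (Bset n) := rfl

lemma natAbs_bound_of_finite {n : ℕ} (s : Set (Fin n → ℤ)) (hs : s.Finite) :
    ∃ b : ℕ, ∀ x ∈ s, ∀ i, |x i| ≤ (b : ℤ) := by
  classical
  have himg : ((fun x : Fin n → ℤ => Finset.univ.sup fun i => (x i).natAbs) '' s).Finite :=
    hs.image _
  obtain ⟨b, hb⟩ := himg.bddAbove
  refine ⟨b, fun x hx i => ?_⟩
  have h2 : Finset.univ.sup (fun i => (x i).natAbs) ≤ b := hb ⟨x, hx, rfl⟩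
  have h0 : (x i).natAbs ≤ Finset.univ.sup (fun i => (x i).natAbs) :=
    Finset.le_sup (f := fun i => (x i).natAbs) (Finset.mem_univ i)
  have h1 : (x i).natAbs ≤ b := le_trans h0 h2
  calc |x i| = ((x i).natAbs : ℤ) := Int.abs_eq_natAbs _
  _ ≤ (b : ℤ) := by exact_mod_cast h1

lemma Bset_nonempty (n : ℕ) : (Bset n).Nonempty := by
  classical
  have h : ∀ S : SystemEn n, ∃ bS : ℕ, {x : Fin n → ℤ | S.Solves x}.Finite →
      ∀ x : Fin n → ℤ, S.Solves x → ∀ i, |x i| ≤ (bS : ℤ) := by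
    intro S
    by_cases hf : {x : Fin n → ℤ | S.Solves x}.Finite
    · obtain ⟨b, hb⟩ := natAbs_bound_of_finite _ hf
      exact ⟨b, fun _ x hx i => hb x hx i⟩
    · exact ⟨0, fun hf' => absurd hf' hf⟩
  choose bS hbS using h
  obtain ⟨B, hB⟩ := (Set.finite_range bS).bddAbove
  refine ⟨B, fun S hf x hx i => ?_⟩
  calc |x i| ≤ (bS S : ℤ) := hbS S hf x hx i
  _ ≤ (B : ℤ) := by exact_mod_cast hB ⟨S, rfl⟩

lemma fBound_mem (n : ℕ) : fBound n ∈ Bset n := Nat.sInf_mem (Bset_nonempty n)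

def sysExtend {m n : ℕ} (h : m ≤ n) (S : SystemEn m) : SystemEn n where
  eqOne := S.eqOne.image (Fin.castLE h) ∪
    Finset.univ.filter (fun j : Fin n => m ≤ j.val)
  addEq := S.addEq.image
    (fun t => (Fin.castLE h t.1, Fin.castLE h t.2.1, Fin.castLE h t.2.2))
  mulEq := S.mulEq.image
    (fun t => (Fin.castLE h t.1, Fin.castLE h t.2.1, Fin.castLE h t.2.2))

lemma extend_solves_iff {m n : ℕ} (h : m ≤ n) (S : SystemEn m) (x : Fin n → ℤ) :
    (sysExtend h S).Solves x ↔
      S.Solves (x ∘ Fin.castLE h) ∧ ∀ j : Fin n, m ≤ j.val → x j = 1 := by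
  constructor
  · rintro ⟨h1, h2, h3⟩
    refine ⟨⟨?_, ?_, ?_⟩, ?_⟩
    · intro i hi
      exact h1 _ (Finset.mem_union_left _ (Finset.mem_image_of_mem _ hi))
    · intro t ht
      exact h2 _ (Finset.mem_image_of_mem _ ht)
    · intro t ht
      exact h3 _ (Finset.mem_image_of_mem _ ht)
    · intro j hj
      exact h1 j (Finset.mem_union_right _ (by simp [hj]))
  · rintro ⟨⟨h1, h2, h3⟩, hone⟩
    refine ⟨?_, ?_, ?_⟩
    · intro i hi
      rcases Finset.mem_union.mp hi with hi | hi
      · obtain ⟨i₀, hi₀, rfl⟩ := Finset.mem_image.mp hi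
        exact h1 i₀ hi₀
      · exact hone i (by simpa using hi)
    · intro t ht
      obtain ⟨t₀, ht₀, rfl⟩ := Finset.mem_image.mp ht
      exact h2 t₀ ht₀
    · intro t ht
      obtain ⟨t₀, ht₀, rfl⟩ := Finset.mem_image.mp ht
      exact h3 t₀ ht₀

lemma fBound_mono {m n : ℕ} (h : m ≤ n) : fBound m ≤ fBound n := by
  rw [fBound_eq m]
  apply Nat.sInf_le
  intro S hf x hx i
  have hfin' : {x' : Fin n → ℤ | (sysExtend h S).Solves x'}.Finite := by
    apply Set.Finite.of_finite_image (f := fun x' : Fin n → ℤ => x' ∘ Fin.castLE h)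
    · apply hf.subset
      rintro _ ⟨x', hx', rfl⟩
      exact ((extend_solves_iff h S x').mp hx').1
    · intro x1 h1 x2 h2 heq
      rw [Set.mem_setOf_eq, extend_solves_iff] at h1 h2
      funext j
      by_cases hj : j.val < m
      · have := congrFun heq ⟨j.val, hj⟩
        simpa [Function.comp, Fin.castLE] using this
      · rw [h1.2 j (by omega), h2.2 j (by omega)]
  have hx' : (sysExtend h S).Solves
      (fun j : Fin n => if hj : j.val < m then x ⟨j.val, hj⟩ else 1) := by
    rw [extend_solves_iff]
    constructor
    · have : ((fun j : Fin n => if hj : j.val < m then x ⟨j.val, hj⟩ else 1)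
          ∘ Fin.castLE h) = x := by
        funext i
        simp [Function.comp, Fin.castLE]
      rw [this]
      exact hx
    · intro j hj
      rw [dif_neg (by omega)]
  have hb := fBound_mem n (sysExtend h S) hfin' _ hx' (Fin.castLE h i)
  simpa [Fin.castLE] using hb


lemma sols_finite (p : ℕ) (prog : List Instr) (hWF : WF p prog) (B : ℤ)
    (hB : ∀ x : Fin (p + prog.length) → ℤ, (sysOf p prog).Solves x →
      ∀ j : Fin p, |x (Fin.castLE (by omega) j)| ≤ B) :
    {x : Fin (p + prog.length) → ℤ | (sysOf p prog).Solves x}.Finite := by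
  apply Set.Finite.of_finite_image
    (f := fun x : Fin (p + prog.length) → ℤ => fun j : Fin p => x (Fin.castLE (by omega) j))
  · apply Set.Finite.subset (Set.Finite.pi fun _ : Fin p => Set.finite_Icc (-B) B)
    rintro _ ⟨x, hx, rfl⟩
    intro j _
    have := hB x hx j
    rw [Set.mem_Icc]
    constructor <;> [linarith [abs_nonneg (x (Fin.castLE (by omega) j)),
        neg_abs_le (x (Fin.castLE (by omega) j))]; linarith [le_abs_self
        (x (Fin.castLE (by omega) j))]]
  · intro x1 h1 x2 h2 heq
    exact sols_inj p prog hWF h1 h2 (fun j => congrFun heq j)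

lemma fBound_unbounded (K : ℕ) : K ≤ fBound (2 * K + 2) := by
  classical
  set pe : PE Empty := PE.ofNat K with hpe
  set prog := pe.comp Empty.elim 0 with hprog
  have hlen : prog.length = 2 * K + 2 := by
    rw [hprog, PE.comp_length, hpe, PE.len_ofNat]
  obtain ⟨-, hval, hout, hWF, hok⟩ :=
    PE.comp_spec pe Empty.elim Empty.elim [] 0 rfl (fun s => s.elim)
  have hWF' : WF 0 prog := hWF
  have hsol := canon_solves 0 prog hWF' [] rfl hok
  have hfin := sols_finite 0 prog hWF' 0 (fun x hx j => j.elim0)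
  have houtlt : pe.out Empty.elim 0 < 0 + prog.length := by
    rw [hlen]
    have : pe.len = 2 * K + 2 := by rw [hpe, PE.len_ofNat]
    omega
  have hb := fBound_mem (0 + prog.length) (sysOf 0 prog) hfin _ hsol
    ⟨pe.out Empty.elim 0, houtlt⟩
  have heval : pe.eval Empty.elim = (K : ℤ) := by rw [hpe, PE.eval_ofNat]
  rw [heval, ← hprog] at hval
  simp only [hval] at hb
  rw [abs_of_nonneg (by positivity)] at hb
  have : (K : ℤ) ≤ (fBound (2 * K + 2) : ℤ) := by
    rwa [show 0 + prog.length = 2 * K + 2 by omega] at hb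
  exact_mod_cast this

lemma exists_sq4 (m : ℕ) :
    ∃ w : Fin 4 → ℤ, (w 0) ^ 2 + (w 1) ^ 2 + (w 2) ^ 2 + (w 3) ^ 2 = (m : ℤ) := by
  obtain ⟨a, b, c, d, habcd⟩ := Nat.sum_four_squares m
  refine ⟨![(a : ℤ), b, c, d], ?_⟩
  simp only [Matrix.cons_val_zero, Matrix.cons_val_one, Matrix.head_cons]
  have h : ((a ^ 2 + b ^ 2 + c ^ 2 + d ^ 2 : ℕ) : ℤ) = (m : ℤ) := by rw [habcd]
  push_cast at h
  rw [show ((![(a : ℤ), b, c, d] 2) : ℤ) = (c : ℤ) by rfl,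
      show ((![(a : ℤ), b, c, d] 3) : ℤ) = (d : ℤ) by rfl]
  exact h

lemma bound_of_finite_funs {r : ℕ} (s : Set (Fin r → ℕ)) (hs : s.Finite) :
    ∃ B : ℕ, ∀ y ∈ s, ∀ j, y j ≤ B := by
  classical
  have himg : ((fun y : Fin r → ℕ => Finset.univ.sup y) '' s).Finite := hs.image _
  obtain ⟨B, hB⟩ := himg.bddAbove
  refine ⟨B, fun y hy j => ?_⟩
  have h2 : Finset.univ.sup y ≤ B := hB ⟨y, hy, rfl⟩
  exact le_trans (Finset.le_sup (Finset.mem_univ j)) h2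

lemma abs_le_sq (v : ℤ) : |v| ≤ v ^ 2 := by
  rcases eq_or_ne v 0 with rfl | h
  · simp
  · have h1 : 1 ≤ |v| := Int.one_le_abs (by omega)
    calc |v| = 1 * |v| := (one_mul _).symm
    _ ≤ |v| * |v| := by apply mul_le_mul_of_nonneg_right h1 (abs_nonneg v)
    _ = v ^ 2 := by rw [abs_mul_abs_self v]; ring


section Key

variable {r : ℕ} (W : MvPolynomial (Fin 2 ⊕ Fin r) ℤ)

set_option maxHeartbeats 1000000 in
lemma key (hrep : ∀ a b : ℕ, (1 ≤ a ∧ b = fBound a) ↔ ∃ y : Fin r → ℕ,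
      MvPolynomial.eval (Sum.elim ![(a : ℤ), (b : ℤ)] fun j => (y j : ℤ)) W = 0)
    (hfin : ∀ a b : ℕ, {y : Fin r → ℕ |
      MvPolynomial.eval (Sum.elim ![(a : ℤ), (b : ℤ)] fun j => (y j : ℤ)) W = 0}.Finite) :
    ∃ C : ℕ, ∀ n : ℕ, 1 ≤ n → fBound n ≤ fBound (C + 8 * Nat.sqrt n) := by
  classical
  obtain ⟨P', Q', hPQ⟩ := exists_PE_decomp W
  set p : ℕ := 4 * (r + 1) with hp
  set sumSq4 : (Fin 4 → (Fin p ⊕ Unit)) → PE (Fin p ⊕ Unit) := fun f =>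
    ((PE.X (f 0)).mul (PE.X (f 0))).add
    (((PE.X (f 1)).mul (PE.X (f 1))).add
    (((PE.X (f 2)).mul (PE.X (f 2))).add ((PE.X (f 3)).mul (PE.X (f 3))))) with hsumSq4
  have sumSq4_eval : ∀ (f : Fin 4 → (Fin p ⊕ Unit)) (u : (Fin p ⊕ Unit) → ℤ),
      (sumSq4 f).eval u
        = (u (f 0)) ^ 2 + (u (f 1)) ^ 2 + (u (f 2)) ^ 2 + (u (f 3)) ^ 2 := by
    intro f u
    simp only [hsumSq4, PE.eval]
    ring
  have sq_le_sumSq4 : ∀ (f : Fin 4 → (Fin p ⊕ Unit)) (u : (Fin p ⊕ Unit) → ℤ) (c : Fin 4),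
      (u (f c)) ^ 2 ≤ (sumSq4 f).eval u := by
    intro f u c
    rw [sumSq4_eval]
    fin_cases c
    · show (u (f 0)) ^ 2 ≤ _
      nlinarith [sq_nonneg (u (f 1)), sq_nonneg (u (f 2)), sq_nonneg (u (f 3))]
    · show (u (f 1)) ^ 2 ≤ _
      nlinarith [sq_nonneg (u (f 0)), sq_nonneg (u (f 2)), sq_nonneg (u (f 3))]
    · show (u (f 2)) ^ 2 ≤ _
      nlinarith [sq_nonneg (u (f 0)), sq_nonneg (u (f 1)), sq_nonneg (u (f 3))]
    · show (u (f 3)) ^ 2 ≤ _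
      nlinarith [sq_nonneg (u (f 0)), sq_nonneg (u (f 1)), sq_nonneg (u (f 2))]
  have sumSq4_nonneg : ∀ (f : Fin 4 → (Fin p ⊕ Unit)) (u : (Fin p ⊕ Unit) → ℤ),
      0 ≤ (sumSq4 f).eval u := by
    intro f u
    rw [sumSq4_eval]
    positivity
  set grp : Fin (r + 1) → Fin 4 → (Fin p ⊕ Unit) := fun g i =>
    Sum.inl ⟨4 * g.val + i.val, by have := g.isLt; have := i.isLt; omega⟩ with hgrp
  set bE : PE (Fin p ⊕ Unit) := sumSq4 (grp 0) with hbE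
  set yE : Fin r → PE (Fin p ⊕ Unit) := fun j => sumSq4 (grp j.succ) with hyE
  set G : (Fin 2 ⊕ Fin r) → PE (Fin p ⊕ Unit) :=
    Sum.elim ![PE.X (Sum.inr ()), bE] yE with hG
  set Pf : PE (Fin p ⊕ Unit) := P'.subst G with hPf
  set Qf : PE (Fin p ⊕ Unit) := Q'.subst G with hQf
  refine ⟨p + bE.len + Pf.len + Qf.len + 9, ?_⟩
  intro n hn
  obtain ⟨q, s, hq, hqs, hslt⟩ : ∃ q s : ℕ, q = Nat.sqrt n ∧ q * q + s = n ∧ s ≤ 2 * q := by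
    have h1 : Nat.sqrt n * Nat.sqrt n ≤ n := by
      have := Nat.sqrt_le' n; rwa [pow_two] at this
    have h2 : n < (Nat.sqrt n + 1) * (Nat.sqrt n + 1) := by
      have := Nat.lt_succ_sqrt' n; rwa [Nat.succ_eq_add_one, pow_two] at this
    have h3 : (Nat.sqrt n + 1) * (Nat.sqrt n + 1)
        = Nat.sqrt n * Nat.sqrt n + 2 * Nat.sqrt n + 1 := by ring
    rw [h3] at h2
    refine ⟨Nat.sqrt n, n - Nat.sqrt n * Nat.sqrt n, rfl, Nat.add_sub_cancel' h1, ?_⟩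
    rw [Nat.sub_le_iff_le_add]
    linarith
  set nE : PE (Fin p) := ((PE.ofNat q).mul (PE.ofNat q)).add (PE.ofNat s) with hnE
  have hnElen : nE.len = 4 * q + 2 * s + 8 := by
    simp only [hnE, PE.len, PE.len_ofNat]
    ring
  have hnEeval : ∀ u : Fin p → ℤ, nE.eval u = (n : ℤ) := by
    intro u
    simp only [hnE, PE.eval, PE.eval_ofNat]
    push_cast [← hqs]
    ring
  set pos₀ : Fin p → ℕ := Fin.val with hpos₀
  set nOut := nE.out pos₀ p with hnOut
  set p₁ := p + nE.len with hp₁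
  set pos₁ : (Fin p ⊕ Unit) → ℕ := Sum.elim Fin.val (fun _ => nOut) with hpos₁
  set bOut := bE.out pos₁ p₁ with hbOut
  set p₂ := p₁ + bE.len with hp₂
  set oP := Pf.out pos₁ p₂ with hoP
  set p₃ := p₂ + Pf.len with hp₃
  set oQ := Qf.out pos₁ p₃ with hoQ
  set p₄ := p₃ + Qf.len with hp₄
  set prog := nE.comp pos₀ p ++ (bE.comp pos₁ p₁ ++ (Pf.comp pos₁ p₂ ++
      (Qf.comp pos₁ p₃ ++ [Instr.aeq oP oQ]))) with hprog
  have hproglen : prog.length = nE.len + bE.len + Pf.len + Qf.len + 1 := by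
    simp [hprog, PE.comp_length]
    ring
  -- the "A" assignment associated to an input vector
  set v₁ : (Fin p → ℤ) → (Fin p ⊕ Unit) → ℤ :=
    fun v => Sum.elim v (fun _ => (n : ℤ)) with hv₁
  set A : (Fin p → ℤ) → (Fin 2 ⊕ Fin r) → ℤ :=
    fun v => Sum.elim ![(n : ℤ), bE.eval (v₁ v)] (fun j => (yE j).eval (v₁ v)) with hA
  have hGeval : ∀ v : Fin p → ℤ, (fun s2 => (G s2).eval (v₁ v)) = A v := by
    intro v
    funext s2
    rcases s2 with i | j
    · fin_cases i
      · simp [hG, hA, PE.eval, hv₁]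
      · simp [hG, hA]
    · simp [hG, hA]
  have hPfeval : ∀ v : Fin p → ℤ,
      Pf.eval (v₁ v) - Qf.eval (v₁ v) = MvPolynomial.eval (A v) W := by
    intro v
    rw [hPf, hQf, PE.eval_subst, PE.eval_subst, hGeval v, hPQ (A v)]
  -- master run facts
  have master : ∀ v : Fin p → ℤ,
      (WF p prog ∧ bOut < p + prog.length) ∧
      (runL (List.ofFn v) prog).getD bOut 0 = bE.eval (v₁ v) ∧
      (okAll (List.ofFn v) prog ↔ Pf.eval (v₁ v) = Qf.eval (v₁ v)) := by
    intro v
    have hlen₀ : (List.ofFn v).length = p := List.length_ofFn (f := v)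
    have hgetD₀ : ∀ j : Fin p, (List.ofFn v).getD j.val 0 = v j := by
      intro j
      rw [List.getD_eq_getElem _ _ (by rw [hlen₀]; exact j.isLt)]
      rw [List.getElem_ofFn]
    have hyp₀ : ∀ st : Fin p, pos₀ st < p ∧ (List.ofFn v).getD (pos₀ st) 0 = v st :=
      fun st => ⟨st.isLt, hgetD₀ st⟩
    obtain ⟨-, hval₁, hout₁, hWF₁, hok₁⟩ :=
      PE.comp_spec nE pos₀ v (List.ofFn v) p hlen₀ hyp₀
    set e₁ := runL (List.ofFn v) (nE.comp pos₀ p) with he₁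
    have hc1len : (nE.comp pos₀ p).length = nE.len := PE.comp_length _ _ _
    have hlen₁ : e₁.length = p₁ := by
      rw [he₁, runL_length, hlen₀, hc1len, hp₁]
    rw [hnEeval v] at hval₁
    have hyp₁ : ∀ st : Fin p ⊕ Unit, pos₁ st < p₁ ∧ e₁.getD (pos₁ st) 0 = v₁ v st := by
      rintro (i | u)
      · constructor
        · show i.val < p₁
          have := i.isLt
          omega
        · show e₁.getD i.val 0 = v i
          rw [he₁, runL_getD_low _ _ (by rw [hlen₀]; exact i.isLt)]
          exact hgetD₀ i
      · exact ⟨by rw [hp₁]; exact hout₁, hval₁⟩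
    obtain ⟨-, hval₂, hout₂, hWF₂, hok₂⟩ := PE.comp_spec bE pos₁ (v₁ v) e₁ p₁ hlen₁ hyp₁
    set e₂ := runL e₁ (bE.comp pos₁ p₁) with he₂
    have hc2len : (bE.comp pos₁ p₁).length = bE.len := PE.comp_length _ _ _
    have hlen₂ : e₂.length = p₂ := by rw [he₂, runL_length, hlen₁, hc2len, hp₂]
    have hyp₂ : ∀ st, pos₁ st < p₂ ∧ e₂.getD (pos₁ st) 0 = v₁ v st := by
      intro st
      obtain ⟨h1, h2⟩ := hyp₁ st
      refine ⟨by omega, ?_⟩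
      rw [he₂, runL_getD_low _ _ (by rw [hlen₁]; omega)]
      exact h2
    obtain ⟨-, hval₃, hout₃, hWF₃, hok₃⟩ := PE.comp_spec Pf pos₁ (v₁ v) e₂ p₂ hlen₂ hyp₂
    set e₃ := runL e₂ (Pf.comp pos₁ p₂) with he₃
    have hc3len : (Pf.comp pos₁ p₂).length = Pf.len := PE.comp_length _ _ _
    have hlen₃ : e₃.length = p₃ := by rw [he₃, runL_length, hlen₂, hc3len, hp₃]
    have hyp₃ : ∀ st, pos₁ st < p₃ ∧ e₃.getD (pos₁ st) 0 = v₁ v st := by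
      intro st
      obtain ⟨h1, h2⟩ := hyp₂ st
      refine ⟨by omega, ?_⟩
      rw [he₃, runL_getD_low _ _ (by rw [hlen₂]; omega)]
      exact h2
    obtain ⟨-, hval₄, hout₄, hWF₄, hok₄⟩ := PE.comp_spec Qf pos₁ (v₁ v) e₃ p₃ hlen₃ hyp₃
    set e₄ := runL e₃ (Qf.comp pos₁ p₃) with he₄
    have hc4len : (Qf.comp pos₁ p₃).length = Qf.len := PE.comp_length _ _ _
    have hlen₄ : e₄.length = p₄ := by rw [he₄, runL_length, hlen₃, hc4len, hp₄]
    have houtP : oP < p₃ := by rw [hp₃]; exact hout₃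
    have houtQ : oQ < p₄ := by rw [hp₄]; exact hout₄
    have houtB : bOut < p₂ := by rw [hp₂]; exact hout₂
    -- values at e₄
    have hPv₄ : e₄.getD oP 0 = Pf.eval (v₁ v) := by
      rw [he₄, runL_getD_low _ _ (by rw [hlen₃]; omega)]
      exact hval₃
    have hQv₄ : e₄.getD oQ 0 = Qf.eval (v₁ v) := hval₄
    have hBv₄ : e₄.getD bOut 0 = bE.eval (v₁ v) := by
      rw [he₄, runL_getD_low _ _ (by rw [hlen₃]; omega),
          he₃, runL_getD_low _ _ (by rw [hlen₂]; omega)]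
      exact hval₂
    -- full run
    have hrunfull : runL (List.ofFn v) prog = runL e₄ [Instr.aeq oP oQ] := by
      rw [hprog, runL_append, runL_append, runL_append, runL_append,
        ← he₁, ← he₂, ← he₃, ← he₄]
    refine ⟨⟨?_, by rw [hproglen]; omega⟩, ?_, ?_⟩
    · -- WF
      rw [hprog]
      apply WF_append hWF₁
      rw [hc1len, ← hp₁]
      apply WF_append hWF₂
      rw [hc2len, ← hp₂]
      apply WF_append hWF₃
      rw [hc3len, ← hp₃]
      apply WF_append hWF₄
      rw [hc4len, ← hp₄]
      intro t ht
      have ht0 : t = 0 := by simp at ht; omega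
      subst ht0
      exact ⟨by omega, by omega⟩
    · -- bOut value
      rw [hrunfull, runL_single, List.getD_append _ _ _ _ (by rw [hlen₄]; omega)]
      exact hBv₄
    · -- okAll iff
      rw [hprog, okAll_append, okAll_append, okAll_append, okAll_append,
        ← he₁, ← he₂, ← he₃, ← he₄]
      simp only [hok₁, hok₂, hok₃, hok₄, true_and]
      show okAll e₄ [Instr.aeq oP oQ] ↔ _
      simp only [okAll, Instr.ok, Instr.val, and_true]
      rw [hPv₄, hQv₄]
  obtain ⟨⟨hWFp, hbOutlt⟩, -, -⟩ := master (fun _ => 0)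
  have hidx : ∀ j : Fin p, ∃ (g : Fin (r + 1)) (c : Fin 4), grp g c = Sum.inl j := by
    intro j
    refine ⟨⟨j.val / 4, by have := j.isLt; omega⟩, ⟨j.val % 4, by omega⟩, ?_⟩
    rw [hgrp]
    show Sum.inl _ = _
    congr 1
    refine Fin.ext ?_
    show 4 * (j.val / 4) + j.val % 4 = j.val
    omega
  -- Step 1: all solutions are bounded on inputs
  obtain ⟨By, hBy⟩ := bound_of_finite_funs _ (hfin n (fBound n))
  set B : ℤ := max ((fBound n : ℕ) : ℤ) ((By : ℕ) : ℤ) with hB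
  have hsolbound : ∀ x : Fin (p + prog.length) → ℤ, (sysOf p prog).Solves x →
      ∀ j : Fin p, |x (Fin.castLE (by omega) j)| ≤ B := by
    intro x hx j
    set v : Fin p → ℤ := fun j2 => x (Fin.castLE (by omega) j2) with hv
    obtain ⟨-, -, hokiff⟩ := master v
    have hsi := (solves_iff p prog hWFp x).mp hx
    obtain ⟨-, hokA⟩ := det p prog hWFp (extEnv x) hsi
    have hinp : (List.ofFn fun j2 : Fin p => extEnv x j2.val) = List.ofFn v := by
      congr 1
      funext j2
      show extEnv x j2.val = v j2
      have hj2 : (j2 : ℕ) < p + prog.length := by omega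
      rw [hv]
      exact dif_pos hj2
    rw [hinp] at hokA
    have heval0 : Pf.eval (v₁ v) = Qf.eval (v₁ v) := hokiff.mp hokA
    have hW0 : MvPolynomial.eval (A v) W = 0 := by
      rw [← hPfeval v, heval0]; ring
    have hbnn : 0 ≤ bE.eval (v₁ v) := by rw [hbE]; exact sumSq4_nonneg _ _
    have hynn : ∀ j2 : Fin r, 0 ≤ (yE j2).eval (v₁ v) := by
      intro j2; rw [hyE]; exact sumSq4_nonneg _ _
    set b' : ℕ := (bE.eval (v₁ v)).toNat with hb'
    set y' : Fin r → ℕ := fun j2 => ((yE j2).eval (v₁ v)).toNat with hy'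
    have hcast : (Sum.elim ![((n : ℕ) : ℤ), ((b' : ℕ) : ℤ)] fun j2 => ((y' j2 : ℕ) : ℤ))
        = A v := by
      funext s2
      rcases s2 with i | j2
      · fin_cases i
        · simp [hA]
        · simp only [Sum.elim_inl, Sum.elim_inr, hA]
          show ((b' : ℕ) : ℤ) = _
          rw [hb', Int.toNat_of_nonneg hbnn]
          simp
      · simp only [Sum.elim_inr, hA]
        show ((y' j2 : ℕ) : ℤ) = _
        rw [hy', Int.toNat_of_nonneg (hynn j2)]
    have hrep' := (hrep n b').mpr ⟨y', by rw [hcast]; exact hW0⟩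
    have hbfb : bE.eval (v₁ v) = ((fBound n : ℕ) : ℤ) := by
      rw [← hrep'.2, ← Int.toNat_of_nonneg hbnn]
    have hy'mem : y' ∈ {y : Fin r → ℕ | MvPolynomial.eval
        (Sum.elim ![((n : ℕ) : ℤ), ((fBound n : ℕ) : ℤ)] fun j2 => ((y j2 : ℕ) : ℤ)) W
          = 0} := by
      rw [Set.mem_setOf_eq, ← hrep'.2, hcast]
      exact hW0
    have hyb : ∀ j2, y' j2 ≤ By := fun j2 => hBy y' hy'mem j2
    obtain ⟨g, c, hgc⟩ := hidx j
    have hvj : v₁ v (grp g c) = v j := by rw [hgc, hv₁]; rfl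
    have hsq : (v j) ^ 2 ≤ (sumSq4 (grp g)).eval (v₁ v) := by
      rw [← hvj]; exact sq_le_sumSq4 _ _ c
    have hgrpbound : (sumSq4 (grp g)).eval (v₁ v) ≤ B := by
      rcases Fin.eq_zero_or_eq_succ g with rfl | ⟨g', rfl⟩
      · rw [← hbE, hbfb, hB]
        exact le_max_left _ _
      · have hyg : sumSq4 (grp g'.succ) = yE g' := by rw [hyE]
        rw [hyg]
        calc (yE g').eval (v₁ v) = ((y' g' : ℕ) : ℤ) := by
              rw [hy', Int.toNat_of_nonneg (hynn g')]
        _ ≤ ((By : ℕ) : ℤ) := by exact_mod_cast hyb g'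
        _ ≤ B := le_max_right _ _
    calc |v j| ≤ (v j) ^ 2 := abs_le_sq (v j)
    _ ≤ B := le_trans hsq hgrpbound
  have hfinsols := sols_finite p prog hWFp B hsolbound
  -- Step 2: construct a solution whose bOut coordinate is fBound n
  obtain ⟨y₀, hy₀⟩ := (hrep n (fBound n)).mp ⟨hn, rfl⟩
  set tgt : Fin (r + 1) → ℕ := fun g => Fin.cases (fBound n) (fun j => y₀ j) g with htgt
  choose w hw using fun g => exists_sq4 (tgt g)
  set v0 : Fin p → ℤ := fun j =>
    w ⟨j.val / 4, by have := j.isLt; omega⟩ ⟨j.val % 4, by omega⟩ with hv0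
  have hv0grp : ∀ (g : Fin (r + 1)) (c : Fin 4), v₁ v0 (grp g c) = w g c := by
    intro g c
    show v0 ⟨4 * g.val + c.val, _⟩ = w g c
    rw [hv0]
    have h1 : (⟨(4 * g.val + c.val) / 4, by have := g.isLt; have := c.isLt; omega⟩
        : Fin (r + 1)) = g := by
      refine Fin.ext ?_
      show (4 * g.val + c.val) / 4 = g.val
      have := c.isLt
      omega
    have h2 : (⟨(4 * g.val + c.val) % 4, by omega⟩ : Fin 4) = c := by
      refine Fin.ext ?_
      show (4 * g.val + c.val) % 4 = c.val
      have := c.isLt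
      omega
    show w ⟨(4 * g.val + c.val) / 4, _⟩ ⟨(4 * g.val + c.val) % 4, _⟩ = w g c
    rw [h1, h2]
  have hbeval : bE.eval (v₁ v0) = ((fBound n : ℕ) : ℤ) := by
    rw [hbE, sumSq4_eval, hv0grp 0 0, hv0grp 0 1, hv0grp 0 2, hv0grp 0 3, hw 0]
    norm_num [htgt]
  have hyeval : ∀ j : Fin r, (yE j).eval (v₁ v0) = ((y₀ j : ℕ) : ℤ) := by
    intro j
    rw [hyE]
    show (sumSq4 (grp j.succ)).eval (v₁ v0) = _
    rw [sumSq4_eval, hv0grp j.succ 0, hv0grp j.succ 1, hv0grp j.succ 2, hv0grp j.succ 3,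
      hw j.succ]
    norm_num [htgt]
  have hAv0 : A v0 = (Sum.elim ![((n : ℕ) : ℤ), ((fBound n : ℕ) : ℤ)]
      fun j => ((y₀ j : ℕ) : ℤ)) := by
    funext s2
    rcases s2 with i | j2
    · fin_cases i
      · simp [hA]
      · simp only [Sum.elim_inl, hA]
        show bE.eval (v₁ v0) = _
        rw [hbeval]
        simp
    · simp only [Sum.elim_inr, hA]
      exact hyeval j2
  have hok0 : okAll (List.ofFn v0) prog := by
    refine (master v0).2.2.mpr ?_
    have h := hPfeval v0
    rw [hAv0, hy₀] at h
    linarith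
  have hsol := canon_solves p prog hWFp (List.ofFn v0) (List.length_ofFn (f := v0)) hok0
  have hmem := fBound_mem (p + prog.length) (sysOf p prog) hfinsols _ hsol ⟨bOut, hbOutlt⟩
  have hcoord : (fun i : Fin (p + prog.length) =>
      (runL (List.ofFn v0) prog).getD i.val 0) ⟨bOut, hbOutlt⟩ = ((fBound n : ℕ) : ℤ) := by
    show (runL (List.ofFn v0) prog).getD bOut 0 = _
    rw [(master v0).2.1, hbeval]
  have hmem2 : |((fBound n : ℕ) : ℤ)| ≤ ((fBound (p + prog.length) : ℕ) : ℤ) := by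
    rw [← hcoord]
    exact hmem
  rw [abs_of_nonneg (by positivity)] at hmem2
  have hstep1 : fBound n ≤ fBound (p + prog.length) := by exact_mod_cast hmem2
  have hNle : p + prog.length ≤ (p + bE.len + Pf.len + Qf.len + 9) + 8 * Nat.sqrt n := by
    rw [hproglen, hnElen, ← hq]
    have hqn : q ≤ n := by rw [hq]; exact Nat.sqrt_le_self n
    omega
  exact le_trans hstep1 (fBound_mono hNle)

end Key

end Dio

/-- there is no finite-fold Diophantine representation of `f`. -/
theorem stmt2 :
    ¬ ∃ (r : ℕ) (W : MvPolynomial (Fin 2 ⊕ Fin r) ℤ),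
      (∀ a b : ℕ,
        (1 ≤ a ∧ b = fBound a) ↔
          ∃ y : Fin r → ℕ,
            eval (Sum.elim ![(a : ℤ), (b : ℤ)] fun j => (y j : ℤ)) W = 0) ∧
      (∀ a b : ℕ,
        {y : Fin r → ℕ |
          eval (Sum.elim ![(a : ℤ), (b : ℤ)] fun j => (y j : ℤ)) W = 0}.Finite) := by
  rintro ⟨r, W, hrep, hfin⟩
  obtain ⟨C, hC⟩ := Dio.key W hrep hfin
  set n₀ := (C + 9) * (C + 9) + 1 with hn₀
  have hbdd : ∀ n, fBound n ≤ fBound n₀ := by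
    intro n
    induction n using Nat.strong_induction_on with
    | _ n ih =>
      rcases le_or_gt n n₀ with h | h
      · exact Dio.fBound_mono h
      · have h1 : 1 ≤ n := by omega
        have hs : C + 9 ≤ Nat.sqrt n := by
          rw [Nat.le_sqrt]
          omega
        have h3 : Nat.sqrt n * Nat.sqrt n ≤ n := by
          have := Nat.sqrt_le' n
          nlinarith
        have h2 : C + 8 * Nat.sqrt n < n := by nlinarith
        exact le_trans (hC n h1) (ih _ h2)
  have hu := Dio.fBound_unbounded (fBound n₀ + 1)
  have h2 := hbdd (2 * (fBound n₀ + 1) + 2)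
  omega
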